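/- Correlation derivative identity via random currents: for the Ising model on a finite graph with ferromagnetic couplings, for any Q ⊆ V and edge uv, (Z_G/2^{|V|})² · [⟨σ_Q σ_u σ_v⟩ - ⟨σ_Q⟩⟨σ_u σ_v⟩] = Σ w(n¹)w(n²)·1[u not connected to v in n¹+n²], where the sum is over pairs of currents n¹, n² with ∂n¹ = Q Δ {u,v} and ∂n² = ∅. In particular ⟨σ_Q σ_u σ_v⟩ - ⟨σ_Q⟩⟨σ_u σ_v⟩ ≥ 0. -/

import Mathlib

open scoped Classical BigOperators

def spin {V : Type*} (σ : V → Bool) (u : V) : ℝ := if σ u then 1 else -1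

def curDeg {V E : Type*} [Fintype E] [DecidableEq V] (ep : E → V × V)
    (n : E → ℕ) (u : V) : ℕ :=
  ∑ e, n e * ((if (ep e).1 = u then 1 else 0) + (if (ep e).2 = u then 1 else 0))

def curSources {V E : Type*} [Fintype V] [Fintype E] [DecidableEq V]
    (ep : E → V × V) (n : E → ℕ) : Finset V :=
  Finset.univ.filter fun u => Odd (curDeg ep n u)

noncomputable def curWt {E : Type*} [Fintype E] (J : E → ℝ) (n : E → ℕ) : ℝ :=
  ∏ e, J e ^ n e / (Nat.factorial (n e) : ℝ)

def curConn {V E : Type*} (ep : E → V × V) (n : E → ℕ) (u v : V) : Prop :=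
  Relation.ReflTransGen (fun x y => ∃ e, 0 < n e ∧ (ep e = (x, y) ∨ ep e = (y, x))) u v

/-- Ising weight with edge couplings. -/
noncomputable def edgeWt {V E : Type*} [Fintype E] (ep : E → V × V) (J : E → ℝ)
    (σ : V → Bool) : ℝ :=
  Real.exp (∑ e, J e * spin σ (ep e).1 * spin σ (ep e).2)

/-- Ising expectation with edge couplings. -/
noncomputable def edgeEv {V E : Type*} [Fintype V] [DecidableEq V] [Fintype E]
    (ep : E → V × V) (J : E → ℝ) (f : (V → Bool) → ℝ) : ℝ :=
  (∑ σ : V → Bool, f σ * edgeWt ep J σ) / (∑ σ : V → Bool, edgeWt ep J σ)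


open scoped symmDiff

namespace RC
set_option linter.unusedSectionVars false
variable {V E : Type*} [Fintype V] [DecidableEq V] [Fintype E]


lemma spin_mul_self (σ : V → Bool) (v : V) : spin σ v * spin σ v = 1 := by
  unfold spin; split <;> norm_num

lemma spin_pow (σ : V → Bool) (v : V) (k : ℕ) :
    spin σ v ^ k = if Even k then 1 else spin σ v := by
  rcases Nat.even_or_odd k with h | h
  · obtain ⟨j, rfl⟩ := h
    rw [if_pos ⟨j, rfl⟩, ← two_mul, pow_mul, sq, spin_mul_self, one_pow]
  · rw [if_neg (by simpa [Nat.not_even_iff_odd] using h)]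
    obtain ⟨j, rfl⟩ := h
    rw [pow_succ, pow_mul, sq, spin_mul_self, one_pow, one_mul]

lemma sum_pi_bool_prod (g : V → Bool → ℝ) :
    ∑ σ : V → Bool, ∏ v, g v (σ v) = ∏ v, (g v true + g v false) := by
  classical
  have h : ∏ v, ∑ b ∈ (Finset.univ : Finset Bool), g v b
      = ∑ σ ∈ Fintype.piFinset (fun _ : V => (Finset.univ : Finset Bool)), ∏ v, g v (σ v) :=
    Finset.prod_univ_sum _ _
  rw [Fintype.piFinset_univ] at h
  rw [← h]
  exact Finset.prod_congr rfl fun v _ => by simp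

lemma mem_curSources {ep : E → V × V} {n : E → ℕ} {v : V} :
    v ∈ curSources ep n ↔ Odd (curDeg ep n v) := by simp [curSources]

lemma spin_prod_eval (ep : E → V × V) (A : Finset V) (n : E → ℕ) :
    ∑ σ : V → Bool, ((∏ a ∈ A, spin σ a) * ∏ e, (spin σ (ep e).1 * spin σ (ep e).2) ^ n e)
      = if curSources ep n = A then (2 : ℝ) ^ Fintype.card V else 0 := by
  classical
  have key : ∀ σ : V → Bool,
      ((∏ a ∈ A, spin σ a) * ∏ e, (spin σ (ep e).1 * spin σ (ep e).2) ^ n e)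
        = ∏ v, (if Even ((if v ∈ A then 1 else 0) + curDeg ep n v) then (1:ℝ) else spin σ v) := by
    intro σ
    have h1 : (∏ a ∈ A, spin σ a) = ∏ v, spin σ v ^ (if v ∈ A then 1 else 0) := by
      symm
      calc ∏ v, spin σ v ^ (if v ∈ A then 1 else 0)
          = ∏ v, (if v ∈ A then spin σ v else 1) :=
            Finset.prod_congr rfl fun v _ => by split <;> simp
        _ = ∏ v ∈ Finset.univ ∩ A, spin σ v := Finset.prod_ite_mem _ _ _
        _ = ∏ a ∈ A, spin σ a := by rw [Finset.univ_inter]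
    have h2 : (∏ e, (spin σ (ep e).1 * spin σ (ep e).2) ^ n e)
        = ∏ v, spin σ v ^ curDeg ep n v := by
      have he : ∀ e, (spin σ (ep e).1 * spin σ (ep e).2) ^ n e
          = ∏ v, spin σ v ^
              (n e * ((if (ep e).1 = v then 1 else 0) + (if (ep e).2 = v then 1 else 0))) := by
        intro e
        have l1 : ∏ v, spin σ v ^ (n e * (if (ep e).1 = v then 1 else 0))
            = spin σ (ep e).1 ^ n e := by
          calc ∏ v, spin σ v ^ (n e * (if (ep e).1 = v then 1 else 0))
              = ∏ v, (if (ep e).1 = v then spin σ v ^ n e else 1) :=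
                Finset.prod_congr rfl fun v _ => by split <;> simp
            _ = spin σ (ep e).1 ^ n e := by rw [Finset.prod_ite_eq]; simp
        have l2 : ∏ v, spin σ v ^ (n e * (if (ep e).2 = v then 1 else 0))
            = spin σ (ep e).2 ^ n e := by
          calc ∏ v, spin σ v ^ (n e * (if (ep e).2 = v then 1 else 0))
              = ∏ v, (if (ep e).2 = v then spin σ v ^ n e else 1) :=
                Finset.prod_congr rfl fun v _ => by split <;> simp
            _ = spin σ (ep e).2 ^ n e := by rw [Finset.prod_ite_eq]; simp
        rw [mul_pow, ← l1, ← l2, ← Finset.prod_mul_distrib]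
        exact Finset.prod_congr rfl fun v _ => by rw [Nat.mul_add, pow_add]
      rw [Finset.prod_congr rfl fun e _ => he e, Finset.prod_comm]
      exact Finset.prod_congr rfl fun v _ => by rw [Finset.prod_pow_eq_pow_sum]; rfl
    rw [h1, h2, ← Finset.prod_mul_distrib]
    refine Finset.prod_congr rfl fun v _ => ?_
    rw [← pow_add, spin_pow]
  rw [Finset.sum_congr rfl fun σ _ => key σ]
  have hs := sum_pi_bool_prod (fun v b =>
    if Even ((if v ∈ A then 1 else 0) + curDeg ep n v) then (1:ℝ) else (if b then 1 else -1))
  rw [show (∑ σ : V → Bool, ∏ v,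
      (if Even ((if v ∈ A then 1 else 0) + curDeg ep n v) then (1:ℝ) else spin σ v))
      = ∑ σ : V → Bool, ∏ v,
      (if Even ((if v ∈ A then 1 else 0) + curDeg ep n v) then (1:ℝ) else (if σ v then 1 else -1))
    from rfl, hs]
  have hval : ∀ v, ((if Even ((if v ∈ A then 1 else 0) + curDeg ep n v) then (1:ℝ)
        else (if true then (1:ℝ) else -1))
      + (if Even ((if v ∈ A then 1 else 0) + curDeg ep n v) then (1:ℝ)
        else (if false then (1:ℝ) else -1)))
      = if Even ((if v ∈ A then 1 else 0) + curDeg ep n v) then (2:ℝ) else 0 := by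
    intro v
    by_cases h : Even ((if v ∈ A then 1 else 0) + curDeg ep n v) <;> norm_num [h]
  rw [Finset.prod_congr rfl fun v _ => hval v]
  by_cases hall : ∀ v, Even ((if v ∈ A then 1 else 0) + curDeg ep n v)
  · have h1 : curSources ep n = A := by
      ext v
      have hv2 := hall v
      rw [mem_curSources]
      by_cases hvA : v ∈ A
      · simp only [hvA, if_true, iff_true] at hv2 ⊢
        rw [Nat.even_iff] at hv2; rw [Nat.odd_iff]; omega
      · simp only [hvA, if_false, iff_false, zero_add] at hv2 ⊢
        rw [Nat.even_iff] at hv2; rw [Nat.odd_iff]; omega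
    rw [if_pos h1]
    rw [Finset.prod_congr rfl fun v _ => if_pos (hall v), Finset.prod_const, Finset.card_univ]
  · obtain ⟨v, hv⟩ := not_forall.1 hall
    have h1 : curSources ep n ≠ A := by
      intro hEq
      apply hv
      have hmem := Finset.ext_iff.1 hEq v
      rw [mem_curSources] at hmem
      by_cases hvA : v ∈ A
      · simp only [hvA, if_true, iff_true] at hmem ⊢
        rw [Nat.odd_iff] at hmem; rw [Nat.even_iff]; omega
      · simp only [hvA, if_false, iff_false, zero_add] at hmem ⊢
        rw [Nat.odd_iff] at hmem; rw [Nat.even_iff]; omega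
    rw [if_neg h1]
    exact Finset.prod_eq_zero (Finset.mem_univ v) (by rw [if_neg hv])


lemma curDeg_mod_two (ep : E → V × V) {n n' : E → ℕ} (h : ∀ e, n e % 2 = n' e % 2) (v : V) :
    curDeg ep n v % 2 = curDeg ep n' v % 2 := by
  unfold curDeg
  rw [Finset.sum_nat_mod,
    Finset.sum_congr rfl (fun e _ => by rw [Nat.mul_mod, h e, ← Nat.mul_mod]),
    ← Finset.sum_nat_mod]

lemma curDeg_add (ep : E → V × V) (n n' : E → ℕ) (v : V) :
    curDeg ep (n + n') v = curDeg ep n v + curDeg ep n' v := by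
  unfold curDeg
  rw [← Finset.sum_add_distrib]
  exact Finset.sum_congr rfl fun e _ => by simp [add_mul]

lemma curSources_parity (ep : E → V × V) {n n' n'' : E → ℕ}
    (h : ∀ e, n'' e % 2 = (n e + n' e) % 2) :
    curSources ep n'' = curSources ep n ∆ curSources ep n' := by
  ext v
  rw [Finset.mem_symmDiff]
  simp only [mem_curSources]
  have h2 : curDeg ep n'' v % 2 = (curDeg ep n v + curDeg ep n' v) % 2 := by
    rw [curDeg_mod_two ep (n' := n + n') (fun e => by simpa using h e) v, curDeg_add]
  simp only [Nat.odd_iff]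
  omega




lemma fin_pi_tsum : ∀ (k : ℕ) (f : Fin k → ℕ → ℝ), (∀ i, Summable fun n => |f i n|) →
    Summable (fun n : Fin k → ℕ => |∏ i, f i (n i)|) ∧
    (∑' n : Fin k → ℕ, ∏ i, f i (n i)) = ∏ i, ∑' m, f i m := by
  intro k
  induction k with
  | zero =>
    intro f _
    constructor
    · exact Summable.of_finite
    · simp [tsum_fintype]
  | succ k ih =>
    intro f hf
    obtain ⟨ihS, ihE⟩ := ih (fun i => f i.succ) (fun i => hf i.succ)
    have hnorm0 : Summable fun n => ‖f 0 n‖ := by simpa [Real.norm_eq_abs] using hf 0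
    have hnormP : Summable fun n : Fin k → ℕ => ‖∏ i, f i.succ (n i)‖ := by
      simpa only [Real.norm_eq_abs] using ihS
    have hSprod : Summable fun p : ℕ × (Fin k → ℕ) => |f 0 p.1 * ∏ i, f i.succ (p.2 i)| := by
      have := (hf 0).mul_of_nonneg ihS (fun n => abs_nonneg _) (fun n => abs_nonneg _)
      refine this.congr fun p => ?_
      rw [abs_mul]
    set e : (Fin (k+1) → ℕ) ≃ ℕ × (Fin k → ℕ) := (Fin.consEquiv fun _ => ℕ).symm with he
    have hcomp : ∀ n : Fin (k+1) → ℕ,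
        (∏ i, f i (n i)) = f 0 ((e n).1) * ∏ i, f i.succ ((e n).2 i) := by
      intro n
      rw [Fin.prod_univ_succ, he]
      simp [Fin.tail, Fin.consEquiv]
    constructor
    · have : Summable fun p : ℕ × (Fin k → ℕ) => |f 0 p.1 * ∏ i, f i.succ (p.2 i)| := hSprod
      have h2 : Summable ((fun p : ℕ × (Fin k → ℕ) => |f 0 p.1 * ∏ i, f i.succ (p.2 i)|) ∘ e) :=
        this.comp_injective e.injective
      exact h2.congr fun n => by simp [hcomp n]
    · have hmul := tsum_mul_tsum_of_summable_norm hnorm0 hnormP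
      calc (∑' n : Fin (k+1) → ℕ, ∏ i, f i (n i))
          = ∑' n : Fin (k+1) → ℕ, f 0 ((e n).1) * ∏ i, f i.succ ((e n).2 i) :=
            tsum_congr hcomp
        _ = ∑' p : ℕ × (Fin k → ℕ), f 0 p.1 * ∏ i, f i.succ (p.2 i) :=
            e.tsum_eq (fun p => f 0 p.1 * ∏ i, f i.succ (p.2 i))
        _ = (∑' n, f 0 n) * ∑' n : Fin k → ℕ, ∏ i, f i.succ (n i) := hmul.symm
        _ = ∏ i, ∑' m, f i m := by rw [ihE, Fin.prod_univ_succ]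

lemma pi_tsum {ι : Type*} [Fintype ι] (f : ι → ℕ → ℝ) (hf : ∀ i, Summable fun n => |f i n|) :
    Summable (fun n : ι → ℕ => |∏ i, f i (n i)|) ∧
    (∑' n : ι → ℕ, ∏ i, f i (n i)) = ∏ i, ∑' m, f i m := by
  classical
  have e : ι ≃ Fin (Fintype.card ι) := Fintype.equivFin ι
  obtain ⟨hS, hE⟩ := fin_pi_tsum (Fintype.card ι) (fun j => f (e.symm j)) (fun j => hf _)
  set eqv : (ι → ℕ) ≃ (Fin (Fintype.card ι) → ℕ) := Equiv.arrowCongr e (Equiv.refl ℕ) with heqv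
  have hprod : ∀ n : ι → ℕ, (∏ i, f i (n i)) = ∏ j, f (e.symm j) ((eqv n) j) := by
    intro n
    rw [← e.symm.prod_comp (fun i => f i (n i))]
    exact Finset.prod_congr rfl fun j _ => by rw [heqv]; rfl
  constructor
  · have h2 : Summable ((fun n : Fin (Fintype.card ι) → ℕ => |∏ j, f (e.symm j) (n j)|) ∘ eqv) :=
      hS.comp_injective eqv.injective
    exact h2.congr fun n => by simp [hprod n]
  · calc (∑' n : ι → ℕ, ∏ i, f i (n i))
        = ∑' n : ι → ℕ, ∏ j, f (e.symm j) ((eqv n) j) := tsum_congr hprod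
      _ = ∑' n : Fin (Fintype.card ι) → ℕ, ∏ j, f (e.symm j) (n j) :=
          eqv.tsum_eq (fun n => ∏ j, f (e.symm j) (n j))
      _ = ∏ j, ∑' m, f (e.symm j) m := hE
      _ = ∏ i, ∑' m, f i m := e.symm.prod_comp (fun i => ∑' m, f i m)


lemma exp_tsum (x : ℝ) : Real.exp x = ∑' k : ℕ, x ^ k / (Nat.factorial k : ℝ) := by
  rw [Real.exp_eq_exp_ℝ, NormedSpace.exp_eq_tsum_div]

variable (ep : E → V × V) (J : E → ℝ)

lemma curWt_nonneg (hJ : ∀ e, 0 ≤ J e) (n : E → ℕ) : 0 ≤ curWt J n :=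
  Finset.prod_nonneg fun e _ => div_nonneg (pow_nonneg (hJ e) _) (Nat.cast_nonneg _)

lemma summable_curWt (hJ : ∀ e, 0 ≤ J e) : Summable (curWt J) := by
  have h := pi_tsum (fun e k => J e ^ k / (Nat.factorial k : ℝ)) (fun e =>
    (Real.summable_pow_div_factorial (J e)).congr fun k =>
      (abs_of_nonneg (div_nonneg (pow_nonneg (hJ e) _) (Nat.cast_nonneg _))).symm)
  exact h.1.of_abs

lemma rep (hJ : ∀ e, 0 ≤ J e) (A : Finset V) :
    ∑ σ : V → Bool, (∏ a ∈ A, spin σ a) * edgeWt ep J σ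
      = 2 ^ Fintype.card V *
        ∑' n : E → ℕ, (if curSources ep n = A then curWt J n else 0) := by
  classical
  have hsum : ∀ (σ : V → Bool) (e : E), Summable fun k : ℕ =>
      |(J e * spin σ (ep e).1 * spin σ (ep e).2) ^ k / (Nat.factorial k : ℝ)| := by
    intro σ e
    refine (Real.summable_pow_div_factorial (|J e * spin σ (ep e).1 * spin σ (ep e).2|)).congr
      fun k => ?_
    rw [abs_div, abs_pow, abs_of_nonneg (by positivity : (0:ℝ) ≤ (Nat.factorial k : ℝ))]
  have hwt : ∀ σ : V → Bool, edgeWt ep J σ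
      = ∑' n : E → ℕ, ∏ e, (J e * spin σ (ep e).1 * spin σ (ep e).2) ^ n e / (Nat.factorial (n e) : ℝ) := by
    intro σ
    rw [edgeWt, Real.exp_sum, Finset.prod_congr rfl fun e _ => exp_tsum _]
    exact (pi_tsum _ (hsum σ)).2.symm
  have hterm : ∀ (σ : V → Bool) (n : E → ℕ),
      (∏ a ∈ A, spin σ a) * ∏ e, (J e * spin σ (ep e).1 * spin σ (ep e).2) ^ n e / (Nat.factorial (n e) : ℝ)
        = curWt J n * ((∏ a ∈ A, spin σ a) * ∏ e, (spin σ (ep e).1 * spin σ (ep e).2) ^ n e) := by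
    intro σ n
    have he : ∀ e, (J e * spin σ (ep e).1 * spin σ (ep e).2) ^ n e / (Nat.factorial (n e) : ℝ)
        = (J e ^ n e / (Nat.factorial (n e) : ℝ)) * (spin σ (ep e).1 * spin σ (ep e).2) ^ n e := by
      intro e; rw [mul_assoc, mul_pow]; ring
    rw [Finset.prod_congr rfl fun e _ => he e, Finset.prod_mul_distrib]
    unfold curWt; ring
  have hsummand : ∀ σ : V → Bool, Summable fun n : E → ℕ =>
      (∏ a ∈ A, spin σ a) * ∏ e, (J e * spin σ (ep e).1 * spin σ (ep e).2) ^ n e / (Nat.factorial (n e) : ℝ) := by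
    intro σ
    exact ((pi_tsum _ (hsum σ)).1.of_abs).mul_left _
  calc ∑ σ : V → Bool, (∏ a ∈ A, spin σ a) * edgeWt ep J σ
      = ∑ σ : V → Bool, ∑' n : E → ℕ,
          (∏ a ∈ A, spin σ a) * ∏ e, (J e * spin σ (ep e).1 * spin σ (ep e).2) ^ n e / (Nat.factorial (n e) : ℝ) :=
        Finset.sum_congr rfl fun σ _ => by rw [hwt σ, ← tsum_mul_left]
    _ = ∑' n : E → ℕ, ∑ σ : V → Bool,
          (∏ a ∈ A, spin σ a) * ∏ e, (J e * spin σ (ep e).1 * spin σ (ep e).2) ^ n e / (Nat.factorial (n e) : ℝ) :=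
        (Summable.tsum_finsetSum fun σ _ => hsummand σ).symm
    _ = ∑' n : E → ℕ, curWt J n * (if curSources ep n = A then (2:ℝ) ^ Fintype.card V else 0) := by
        refine tsum_congr fun n => ?_
        rw [Finset.sum_congr rfl fun σ _ => hterm σ n, ← Finset.mul_sum, spin_prod_eval]
    _ = 2 ^ Fintype.card V * ∑' n : E → ℕ, (if curSources ep n = A then curWt J n else 0) := by
        rw [← tsum_mul_left]
        refine tsum_congr fun n => ?_
        split <;> ring


lemma curConn_mono {n n' : E → ℕ} (h : ∀ e, n e ≤ n' e) {u v : V} (hc : curConn ep n u v) :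
    curConn ep n' u v := by
  unfold curConn at *
  induction hc with
  | refl => exact .refl
  | tail _ hxy ih =>
    obtain ⟨e, he, hor⟩ := hxy
    exact ih.tail ⟨e, lt_of_lt_of_le he (h e), hor⟩

lemma curSources_single (e : E) :
    curSources ep (fun e' => if e' = e then 1 else 0) = {(ep e).1} ∆ {(ep e).2} := by
  ext v
  rw [mem_curSources, Finset.mem_symmDiff]
  have hdeg : curDeg ep (fun e' => if e' = e then 1 else 0) v
      = (if (ep e).1 = v then 1 else 0) + (if (ep e).2 = v then 1 else 0) := by
    unfold curDeg
    rw [Finset.sum_eq_single e]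
    · simp
    · intro e' _ hne; simp [hne]
    · intro h; exact absurd (Finset.mem_univ e) h
  rw [hdeg]
  simp only [Finset.mem_singleton]
  by_cases h1 : (ep e).1 = v <;> by_cases h2 : (ep e).2 = v <;> simp [h1, h2, eq_comm] <;> tauto

lemma exists_subcurrent {m : E → ℕ} {u x : V} (h : curConn ep m u x) :
    ∃ k : E → ℕ, (∀ e, k e ≤ m e) ∧ curSources ep k = {u} ∆ {x} := by
  induction h with
  | refl =>
    refine ⟨fun _ => 0, fun e => Nat.zero_le _, ?_⟩
    rw [symmDiff_self]
    ext v; rw [mem_curSources]; simp [curDeg]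
  | @tail b c h1 h2 ih =>
    obtain ⟨k, hk, hks⟩ := ih
    obtain ⟨e, he, hor⟩ := h2
    refine ⟨fun e' => if e' = e then (if k e < m e then k e + 1 else k e - 1) else k e',
      fun e' => ?_, ?_⟩
    · dsimp only
      by_cases h : e' = e
      · subst h; rw [if_pos rfl]; have := hk e'; split <;> omega
      · rw [if_neg h]; exact hk e'
    · have hpar : ∀ e', (if e' = e then (if k e < m e then k e + 1 else k e - 1) else k e') % 2
          = (k e' + (if e' = e then 1 else 0)) % 2 := by
        intro e'
        by_cases h : e' = e
        · subst h; rw [if_pos rfl, if_pos rfl]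
          have h3 := hk e'; split <;> omega
        · rw [if_neg h, if_neg h]; simp
      rw [curSources_parity ep hpar, hks, curSources_single]
      rcases hor with h | h <;> rw [h]
      · rw [symmDiff_assoc]
        congr 1
        rw [← symmDiff_assoc, symmDiff_self, bot_symmDiff]
      · rw [symmDiff_comm ({(b, c).2} : Finset V), symmDiff_assoc]
        congr 1
        rw [← symmDiff_assoc, symmDiff_self, bot_symmDiff]

lemma conn_of_sources {n : E → ℕ} {u v : V} (huv : u ≠ v)
    (h : curSources ep n = {u, v}) : curConn ep n u v := by
  by_contra hc
  set S : Finset V := Finset.univ.filter fun x => curConn ep n u x with hS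
  have hu : u ∈ S := by simp only [hS, Finset.mem_filter, Finset.mem_univ, true_and]; exact .refl
  have hv : v ∉ S := by
    simp only [hS, Finset.mem_filter, Finset.mem_univ, true_and]; exact hc
  have hclosed : ∀ e, 0 < n e → ((ep e).1 ∈ S ↔ (ep e).2 ∈ S) := by
    intro e he
    simp only [hS, Finset.mem_filter, Finset.mem_univ, true_and]
    constructor
    · intro h1; exact h1.tail ⟨e, he, Or.inl Prod.mk.eta.symm⟩
    · intro h1; exact h1.tail ⟨e, he, Or.inr Prod.mk.eta.symm⟩
  have heven : (∑ x ∈ S, curDeg ep n x) % 2 = 0 := by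
    unfold curDeg
    rw [Finset.sum_comm]
    have hterm : ∀ e,
        (∑ x ∈ S, n e * ((if (ep e).1 = x then 1 else 0) + (if (ep e).2 = x then 1 else 0))) % 2
          = 0 := by
      intro e
      rw [← Finset.mul_sum, Finset.sum_add_distrib, Finset.sum_ite_eq, Finset.sum_ite_eq]
      rcases Nat.eq_zero_or_pos (n e) with h0 | h0
      · simp [h0]
      · have hcl := hclosed e h0
        by_cases h1 : (ep e).1 ∈ S
        · have h2 : (ep e).2 ∈ S := hcl.1 h1
          rw [if_pos h1, if_pos h2]; omega
        · have h2 : (ep e).2 ∉ S := fun hh => h1 (hcl.2 hh)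
          rw [if_neg h1, if_neg h2]; omega
    rw [Finset.sum_nat_mod, Finset.sum_congr rfl fun e _ => hterm e]
    simp
  have hdegu : Odd (curDeg ep n u) := by
    have : u ∈ curSources ep n := by rw [h]; exact Finset.mem_insert_self _ _
    exact mem_curSources.1 this
  have hrest : ∀ x ∈ S.erase u, curDeg ep n x % 2 = 0 := by
    intro x hx
    have hxu : x ≠ u := (Finset.mem_erase.1 hx).1
    have hxv : x ≠ v := fun hEq => hv (hEq ▸ (Finset.mem_erase.1 hx).2)
    have hxs : x ∉ curSources ep n := by
      rw [h]; simp [hxu, hxv]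
    rw [mem_curSources, Nat.odd_iff] at hxs; omega
  have hsplit : ∑ x ∈ S.erase u, curDeg ep n x + curDeg ep n u = ∑ x ∈ S, curDeg ep n x :=
    Finset.sum_erase_add _ _ hu
  have hrest2 : (∑ x ∈ S.erase u, curDeg ep n x) % 2 = 0 := by
    rw [Finset.sum_nat_mod, Finset.sum_congr rfl hrest]
    simp
  rw [Nat.odd_iff] at hdegu
  omega

lemma count_filter_eq (m k : E → ℕ) :
    (Finset.univ.filter fun S : ∀ e, Finset (Fin (m e)) => (fun e => (S e).card) = k).card
      = ∏ e, (m e).choose (k e) := by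
  classical
  have h1 : (Finset.univ.filter fun S : ∀ e, Finset (Fin (m e)) => (fun e => (S e).card) = k)
      = Fintype.piFinset fun e => Finset.univ.filter fun t : Finset (Fin (m e)) => t.card = k e := by
    ext S
    simp [Fintype.mem_piFinset, funext_iff]
  rw [h1, Fintype.card_piFinset]
  refine Finset.prod_congr rfl fun e _ => ?_
  have h2 : (Finset.univ.filter fun t : Finset (Fin (m e)) => t.card = k e)
      = Finset.powersetCard (k e) Finset.univ := by
    rw [Finset.powersetCard_eq_filter, Finset.powerset_univ]
  rw [h2, Finset.card_powersetCard, Finset.card_univ, Fintype.card_fin]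

lemma card_symmDiff_mod_two {α : Type*} [DecidableEq α] (s t : Finset α) :
    (s ∆ t).card % 2 = (s.card + t.card) % 2 := by
  have h1 : s ∆ t = (s ∪ t) \ (s ∩ t) := by
    rw [symmDiff_eq_sup_sdiff_inf, Finset.sup_eq_union, Finset.inf_eq_inter]
  have h2 : (s ∩ t) ⊆ (s ∪ t) := Finset.inter_subset_left.trans Finset.subset_union_left
  have h3 := Finset.card_sdiff_of_subset h2
  have h4 := Finset.card_union_add_card_inter s t
  have h5 := Finset.card_le_card h2
  rw [h1, h3]
  omega

lemma switch_count {u v : V} (m : E → ℕ)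
    (k₀ : E → ℕ) (hk₀ : ∀ e, k₀ e ≤ m e) (hs₀ : curSources ep k₀ = {u} ∆ {v}) (R : Finset V) :
    ∑ k ∈ Finset.Iic m, (if curSources ep k = R then ∏ e, (m e).choose (k e) else 0)
      = ∑ k ∈ Finset.Iic m,
          (if curSources ep k = R ∆ ({u} ∆ {v}) then ∏ e, (m e).choose (k e) else 0) := by
  classical
  have hK : ∀ e, ∃ t : Finset (Fin (m e)), t.card = k₀ e := by
    intro e
    obtain ⟨t, _, ht⟩ := Finset.exists_subset_card_eq (s := (Finset.univ : Finset (Fin (m e)))) (n := k₀ e)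
      (by simpa using hk₀ e)
    exact ⟨t, ht⟩
  choose K₀ hK₀c using hK
  have hmap : ∀ R' : Finset V,
      ∑ k ∈ Finset.Iic m, (if curSources ep k = R' then ∏ e, (m e).choose (k e) else 0)
        = ∑ S : ∀ e, Finset (Fin (m e)),
            (if curSources ep (fun e => (S e).card) = R' then 1 else 0) := by
    intro R'
    rw [← Finset.sum_fiberwise_of_maps_to (g := fun S : ∀ e, Finset (Fin (m e)) => fun e => (S e).card)
      (t := Finset.Iic m)
      (fun S _ => Finset.mem_Iic.2 fun e => by
        simpa using Finset.card_le_univ (S e))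
      (fun S => if curSources ep (fun e => (S e).card) = R' then 1 else 0)]
    refine Finset.sum_congr rfl fun k hk => ?_
    have hconst : ∀ S ∈ Finset.univ.filter
        (fun S : ∀ e, Finset (Fin (m e)) => (fun e => (S e).card) = k),
        (if curSources ep (fun e => (S e).card) = R' then (1:ℕ) else 0)
          = if curSources ep k = R' then 1 else 0 := by
      intro S hS
      rw [(Finset.mem_filter.1 hS).2]
    rw [Finset.sum_congr rfl hconst, Finset.sum_const, count_filter_eq m k, smul_eq_mul]
    split <;> simp [mul_comm]
  rw [hmap R, hmap (R ∆ ({u} ∆ {v}))]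
  have hinv : Function.Involutive (fun S : ∀ e, Finset (Fin (m e)) => fun e => S e ∆ K₀ e) :=
    fun S => by funext e; exact symmDiff_symmDiff_cancel_right _ _
  rw [← Equiv.sum_comp (hinv.toPerm _)
    (fun S => if curSources ep (fun e => (S e).card) = R ∆ ({u} ∆ {v}) then (1:ℕ) else 0)]
  refine Finset.sum_congr rfl fun S _ => ?_
  have hpar : curSources ep (fun e => ((S e) ∆ (K₀ e)).card)
      = curSources ep (fun e => (S e).card) ∆ curSources ep k₀ := by
    apply curSources_parity
    intro e
    rw [card_symmDiff_mod_two, hK₀c e]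
  have happ : (Function.Involutive.toPerm _ hinv) S = fun e => S e ∆ K₀ e := rfl
  rw [happ, hpar, hs₀]
  by_cases h : curSources ep (fun e => (S e).card) = R
  · rw [h, if_pos rfl, if_pos rfl]
  · have h2 : ¬ (curSources ep (fun e => (S e).card) ∆ ({u} ∆ {v}) = R ∆ ({u} ∆ {v})) :=
      fun hc => h (symmDiff_left_injective _ hc)
    rw [if_neg h2, if_neg h]

lemma pair_symmDiff {u v : V} (huv : u ≠ v) : ({u} ∆ {v} : Finset V) = {u, v} := by
  ext x
  rw [Finset.mem_symmDiff]
  simp only [Finset.mem_singleton, Finset.mem_insert]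
  by_cases hx : x = u <;> by_cases hx' : x = v <;> simp [hx, hx'] <;>
    first
      | (intro h; exact huv (hx ▸ hx' ▸ h))
      | (intro h; exact huv h.symm)
      | tauto

lemma curWt_split (hJ : ∀ e, 0 ≤ J e) (m k : E → ℕ) (hk : ∀ e, k e ≤ m e) :
    curWt J k * curWt J (fun e => m e - k e)
      = curWt J m * ∏ e, ((m e).choose (k e) : ℝ) := by
  unfold curWt
  rw [← Finset.prod_mul_distrib, ← Finset.prod_mul_distrib]
  refine Finset.prod_congr rfl fun e _ => ?_
  have hc : ((m e).choose (k e) : ℝ) * (Nat.factorial (k e) : ℝ) * (Nat.factorial (m e - k e) : ℝ)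
      = (Nat.factorial (m e) : ℝ) := by
    exact_mod_cast congrArg (fun x : ℕ => (x : ℝ)) (Nat.choose_mul_factorial_mul_factorial (hk e))
  have hJpow : J e ^ k e * J e ^ (m e - k e) = J e ^ m e := by
    rw [← pow_add]; congr 1; have := hk e; omega
  have hk1 : (Nat.factorial (k e) : ℝ) ≠ 0 := by positivity
  have hk2 : (Nat.factorial (m e - k e) : ℝ) ≠ 0 := by positivity
  have hk3 : (Nat.factorial (m e) : ℝ) ≠ 0 := by positivity
  field_simp
  rw [← hc, hJpow]
  ring

lemma tsum_pair_eq (H : (E → ℕ) × (E → ℕ) → ENNReal) :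
    ∑' p, H p = ∑' m : E → ℕ, ∑' k : E → ℕ,
      (if k ≤ m then H (k, fun e => m e - k e) else 0) := by
  classical
  let Ψ : (E → ℕ) × (E → ℕ) ≃ {q : (E → ℕ) × (E → ℕ) // q.2 ≤ q.1} :=
    { toFun := fun p => ⟨(p.1 + p.2, p.1), fun e => Nat.le_add_right _ _⟩
      invFun := fun q => (q.1.2, fun e => q.1.1 e - q.1.2 e)
      left_inv := fun p => by
        refine Prod.ext rfl ?_
        funext e
        simp only [Pi.add_apply]
        omega
      right_inv := fun q => by
        refine Subtype.ext (Prod.ext ?_ rfl)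
        funext e
        have hq : (q : (E → ℕ) × (E → ℕ)).2 e ≤ (q : (E → ℕ) × (E → ℕ)).1 e := q.2 e
        simp only [Pi.add_apply]
        omega }
  have h1 : ∑' p, H p = ∑' q : {q : (E → ℕ) × (E → ℕ) // q.2 ≤ q.1},
      H (q.1.2, fun e => q.1.1 e - q.1.2 e) := by
    rw [← Ψ.tsum_eq (fun q => H ((q : (E → ℕ) × (E → ℕ)).2, fun e => (q : (E → ℕ) × (E → ℕ)).1 e - (q : (E → ℕ) × (E → ℕ)).2 e))]
    refine tsum_congr fun p => ?_
    congr 1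
    refine Prod.ext rfl ?_
    funext e
    show p.2 e = (p.1 + p.2) e - p.1 e
    simp only [Pi.add_apply]
    omega
  calc ∑' p, H p
      = ∑' q : {q : (E → ℕ) × (E → ℕ) // q.2 ≤ q.1},
          H ((q : (E → ℕ) × (E → ℕ)).2,
            fun e => (q : (E → ℕ) × (E → ℕ)).1 e - (q : (E → ℕ) × (E → ℕ)).2 e) := h1
    _ = ∑' q : (E → ℕ) × (E → ℕ),
          Set.indicator {q : (E → ℕ) × (E → ℕ) | q.2 ≤ q.1}
            (fun q => H (q.2, fun e => q.1 e - q.2 e)) q :=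
        tsum_subtype {q : (E → ℕ) × (E → ℕ) | q.2 ≤ q.1}
          (fun q => H (q.2, fun e => q.1 e - q.2 e))
    _ = ∑' m : E → ℕ, ∑' k : E → ℕ, (if k ≤ m then H (k, fun e => m e - k e) else 0) := by
        rw [ENNReal.tsum_prod']
        refine tsum_congr fun m => tsum_congr fun k => ?_
        by_cases hkm : k ≤ m
        · rw [Set.indicator_of_mem (by exact hkm), if_pos hkm]
        · rw [Set.indicator_of_notMem (by exact hkm), if_neg hkm]

lemma per_m_core {u v : V} (huv : u ≠ v) (hJ : ∀ e, 0 ≤ J e) (Q' : Finset V) (m : E → ℕ) :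
    ∑ k ∈ Finset.Iic m,
        (if curSources ep k = Q' ∧ curSources ep (fun e => m e - k e) = ({u, v} : Finset V)
          then ENNReal.ofReal (curWt J k) * ENNReal.ofReal (curWt J (fun e => m e - k e)) else 0)
      = ∑ k ∈ Finset.Iic m,
          (if curSources ep k = Q' ∆ ({u, v} : Finset V) ∧ curSources ep (fun e => m e - k e) = ∅
            then ENNReal.ofReal (curWt J k) * ENNReal.ofReal (curWt J (fun e => m e - k e)) else 0)
          * (if curConn ep m u v then 1 else 0) := by
  classical
  set B : Finset V := ({u, v} : Finset V) with hBdef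
  have hsub : ∀ k ∈ Finset.Iic m,
      curSources ep (fun e => m e - k e) = curSources ep m ∆ curSources ep k := by
    intro k hk
    have hle : ∀ e, k e ≤ m e := fun e => Finset.mem_Iic.1 hk e
    exact curSources_parity ep fun e => by have := hle e; omega
  by_cases hA : curSources ep m = Q' ∆ B
  · by_cases hc : curConn ep m u v
    · -- switching case
      rw [Finset.sum_congr rfl fun k hk => (by rw [if_pos hc, mul_one] :
        (if curSources ep k = Q' ∆ B ∧ curSources ep (fun e => m e - k e) = ∅
          then ENNReal.ofReal (curWt J k) * ENNReal.ofReal (curWt J (fun e => m e - k e)) else 0)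
          * (if curConn ep m u v then 1 else 0)
        = if curSources ep k = Q' ∆ B ∧ curSources ep (fun e => m e - k e) = ∅
          then ENNReal.ofReal (curWt J k) * ENNReal.ofReal (curWt J (fun e => m e - k e)) else 0)]
      -- simplify conditions
      have hcondL : ∀ k ∈ Finset.Iic m,
          ((curSources ep k = Q' ∧ curSources ep (fun e => m e - k e) = B) ↔ curSources ep k = Q') := by
        intro k hk
        constructor
        · exact fun h => h.1
        · intro h
          refine ⟨h, ?_⟩
          rw [hsub k hk, hA, h, symmDiff_comm Q' B, symmDiff_symmDiff_cancel_right]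
      have hcondR : ∀ k ∈ Finset.Iic m,
          ((curSources ep k = Q' ∆ B ∧ curSources ep (fun e => m e - k e) = ∅) ↔
            curSources ep k = Q' ∆ B) := by
        intro k hk
        constructor
        · exact fun h => h.1
        · intro h
          refine ⟨h, ?_⟩
          rw [hsub k hk, hA, h, symmDiff_self]
          rfl
      -- rewrite weights
      have hwt : ∀ k ∈ Finset.Iic m,
          ENNReal.ofReal (curWt J k) * ENNReal.ofReal (curWt J (fun e => m e - k e))
            = ENNReal.ofReal (curWt J m) * ((∏ e, (m e).choose (k e) : ℕ) : ENNReal) := by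
        intro k hk
        have hle : ∀ e, k e ≤ m e := fun e => Finset.mem_Iic.1 hk e
        rw [← ENNReal.ofReal_mul (curWt_nonneg J hJ k), curWt_split J hJ m k hle]
        rw [show (∏ e, ((m e).choose (k e) : ℝ)) = ((∏ e, (m e).choose (k e) : ℕ) : ℝ) by
          push_cast; rfl]
        rw [ENNReal.ofReal_mul (curWt_nonneg J hJ m), ENNReal.ofReal_natCast]
      obtain ⟨k₀, hk₀le, hk₀s⟩ := exists_subcurrent ep hc
      have hs₀ : curSources ep k₀ = {u} ∆ {v} := hk₀s
      calc ∑ k ∈ Finset.Iic m,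
            (if curSources ep k = Q' ∧ curSources ep (fun e => m e - k e) = B
              then ENNReal.ofReal (curWt J k) * ENNReal.ofReal (curWt J (fun e => m e - k e)) else 0)
          = ∑ k ∈ Finset.Iic m, ENNReal.ofReal (curWt J m) *
              ((if curSources ep k = Q' then (∏ e, (m e).choose (k e) : ℕ) else 0 : ℕ) : ENNReal) := by
            refine Finset.sum_congr rfl fun k hk => ?_
            rw [if_congr (hcondL k hk) rfl rfl, hwt k hk]
            split <;> simp
        _ = ENNReal.ofReal (curWt J m) *
              (((∑ k ∈ Finset.Iic m, if curSources ep k = Q' then (∏ e, (m e).choose (k e) : ℕ) else 0 : ℕ)) : ENNReal) := by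
            rw [← Finset.mul_sum]
            congr 1
            rw [Nat.cast_sum]
        _ = ENNReal.ofReal (curWt J m) *
              (((∑ k ∈ Finset.Iic m, if curSources ep k = Q' ∆ ({u} ∆ {v}) then (∏ e, (m e).choose (k e) : ℕ) else 0 : ℕ)) : ENNReal) := by
            rw [switch_count ep m k₀ hk₀le hs₀ Q']
        _ = ∑ k ∈ Finset.Iic m,
              (if curSources ep k = Q' ∆ B ∧ curSources ep (fun e => m e - k e) = ∅
                then ENNReal.ofReal (curWt J k) * ENNReal.ofReal (curWt J (fun e => m e - k e)) else 0) := by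
            rw [Nat.cast_sum, Finset.mul_sum]
            refine Finset.sum_congr rfl fun k hk => ?_
            rw [if_congr (hcondR k hk) rfl rfl, hwt k hk, pair_symmDiff huv]
            split <;> simp
    · -- not connected
      rw [Finset.sum_congr rfl fun k hk => (by rw [if_neg hc, mul_zero] :
        (if curSources ep k = Q' ∆ B ∧ curSources ep (fun e => m e - k e) = ∅
          then ENNReal.ofReal (curWt J k) * ENNReal.ofReal (curWt J (fun e => m e - k e)) else 0)
          * (if curConn ep m u v then 1 else 0) = 0), Finset.sum_const_zero]
      refine Finset.sum_eq_zero fun k hk => ?_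
      rw [if_neg]
      rintro ⟨-, h2⟩
      have hle : ∀ e, k e ≤ m e := fun e => Finset.mem_Iic.1 hk e
      exact hc (curConn_mono ep (fun e => Nat.sub_le _ _) (conn_of_sources ep huv h2))
  · -- wrong total sources: all terms vanish
    rw [Finset.sum_eq_zero, Finset.sum_eq_zero]
    · intro k hk
      rw [if_neg, zero_mul]
      rintro ⟨h1, h2⟩
      rw [hsub k hk, h1] at h2
      exact hA (by
        have := symmDiff_eq_bot.1 (by rw [← Finset.bot_eq_empty] at h2; exact h2)
        exact this ▸ rfl)
    · intro k hk
      rw [if_neg]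
      rintro ⟨h1, h2⟩
      rw [hsub k hk, h1] at h2
      apply hA
      have h3 : curSources ep m ∆ Q' ∆ Q' = B ∆ Q' := by rw [h2]
      rw [symmDiff_symmDiff_cancel_right] at h3
      rw [h3, symmDiff_comm]

lemma switching_tsum {u v : V} (huv : u ≠ v) (hJ : ∀ e, 0 ≤ J e) (Q' : Finset V) :
    (∑' p : (E → ℕ) × (E → ℕ),
        if curSources ep p.1 = Q' ∧ curSources ep p.2 = ({u, v} : Finset V)
          then ENNReal.ofReal (curWt J p.1) * ENNReal.ofReal (curWt J p.2) else 0)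
      = ∑' p : (E → ℕ) × (E → ℕ),
          (if curSources ep p.1 = Q' ∆ ({u, v} : Finset V) ∧ curSources ep p.2 = ∅
            then ENNReal.ofReal (curWt J p.1) * ENNReal.ofReal (curWt J p.2) else 0)
          * (if curConn ep (p.1 + p.2) u v then 1 else 0) := by
  classical
  rw [tsum_pair_eq ((fun p => if curSources ep p.1 = Q' ∧ curSources ep p.2 = ({u, v} : Finset V)
        then ENNReal.ofReal (curWt J p.1) * ENNReal.ofReal (curWt J p.2) else 0) :
      (E → ℕ) × (E → ℕ) → ENNReal),
    tsum_pair_eq ((fun p =>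
        (if curSources ep p.1 = Q' ∆ ({u, v} : Finset V) ∧ curSources ep p.2 = ∅
          then ENNReal.ofReal (curWt J p.1) * ENNReal.ofReal (curWt J p.2) else 0)
        * (if curConn ep (p.1 + p.2) u v then 1 else 0)) :
      (E → ℕ) × (E → ℕ) → ENNReal)]
  refine tsum_congr fun m => ?_
  rw [tsum_eq_sum (s := Finset.Iic m)
      (fun k hk => by rw [if_neg (by simpa [Finset.mem_Iic] using hk)]),
    tsum_eq_sum (s := Finset.Iic m)
      (fun k hk => by rw [if_neg (by simpa [Finset.mem_Iic] using hk)])]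
  calc ∑ k ∈ Finset.Iic m,
        (if k ≤ m then
          (if curSources ep k = Q' ∧ curSources ep (fun e => m e - k e) = ({u, v} : Finset V)
            then ENNReal.ofReal (curWt J k) * ENNReal.ofReal (curWt J (fun e => m e - k e)) else 0)
          else 0)
      = ∑ k ∈ Finset.Iic m,
          (if curSources ep k = Q' ∧ curSources ep (fun e => m e - k e) = ({u, v} : Finset V)
            then ENNReal.ofReal (curWt J k) * ENNReal.ofReal (curWt J (fun e => m e - k e)) else 0) :=
        Finset.sum_congr rfl fun k hk => if_pos (Finset.mem_Iic.1 hk)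
    _ = ∑ k ∈ Finset.Iic m,
          (if curSources ep k = Q' ∆ ({u, v} : Finset V)
              ∧ curSources ep (fun e => m e - k e) = ∅
            then ENNReal.ofReal (curWt J k) * ENNReal.ofReal (curWt J (fun e => m e - k e)) else 0)
          * (if curConn ep m u v then 1 else 0) := per_m_core ep J huv hJ Q' m
    _ = ∑ k ∈ Finset.Iic m,
        (if k ≤ m then
          (if curSources ep k = Q' ∆ ({u, v} : Finset V)
              ∧ curSources ep (fun e => m e - k e) = ∅
            then ENNReal.ofReal (curWt J k) * ENNReal.ofReal (curWt J (fun e => m e - k e)) else 0)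
          * (if curConn ep (k + fun e => m e - k e) u v then 1 else 0)
          else 0) := by
        refine Finset.sum_congr rfl fun k hk => ?_
        have hm : (k + fun e => m e - k e) = m := by
          funext e
          have hke : k e ≤ m e := Finset.mem_Iic.1 hk e
          simp only [Pi.add_apply]
          omega
        rw [if_pos (Finset.mem_Iic.1 hk), hm]

lemma prod_spin_symmDiff (σ : V → Bool) (S T : Finset V) :
    (∏ a ∈ S, spin σ a) * ∏ a ∈ T, spin σ a = ∏ a ∈ S ∆ T, spin σ a := by
  classical
  have hS : ∏ a ∈ S, spin σ a = (∏ a ∈ S \ T, spin σ a) * ∏ a ∈ S ∩ T, spin σ a := by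
    rw [← Finset.prod_union (Finset.disjoint_sdiff_inter S T), Finset.sdiff_union_inter]
  have hT : ∏ a ∈ T, spin σ a = (∏ a ∈ T \ S, spin σ a) * ∏ a ∈ T ∩ S, spin σ a := by
    rw [← Finset.prod_union (Finset.disjoint_sdiff_inter T S), Finset.sdiff_union_inter]
  have hsq : (∏ a ∈ T ∩ S, spin σ a) * (∏ a ∈ T ∩ S, spin σ a) = 1 := by
    rw [← Finset.prod_mul_distrib, Finset.prod_congr rfl fun a _ => spin_mul_self σ a]
    exact Finset.prod_const_one
  have hsym : (S ∆ T) = (S \ T) ∪ (T \ S) := by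
    rw [symmDiff_def, Finset.sup_eq_union]
  calc (∏ a ∈ S, spin σ a) * ∏ a ∈ T, spin σ a
      = ((∏ a ∈ S \ T, spin σ a) * ∏ a ∈ T \ S, spin σ a) *
        ((∏ a ∈ T ∩ S, spin σ a) * ∏ a ∈ T ∩ S, spin σ a) := by
        rw [hS, hT, Finset.inter_comm S T]; ring
    _ = ∏ a ∈ S ∆ T, spin σ a := by
        rw [hsq, mul_one, hsym, ← Finset.prod_union disjoint_sdiff_sdiff]

end RC

theorem correlation_difference_random_current {V E : Type*} [Fintype V] [DecidableEq V]
    [Fintype E] (ep : E → V × V) (J : E → ℝ) (hferro : ∀ e, 0 ≤ J e)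
    (Q : Finset V) (u v : V) :
    (((∑ σ : V → Bool, edgeWt ep J σ) / 2 ^ (Fintype.card V)) ^ 2 *
        (edgeEv ep J (fun σ => (∏ a ∈ Q, spin σ a) * spin σ u * spin σ v) -
          edgeEv ep J (fun σ => ∏ a ∈ Q, spin σ a) *
            edgeEv ep J (fun σ => spin σ u * spin σ v))
      = ∑' p : {p : (E → ℕ) × (E → ℕ) //
            curSources ep p.1 = symmDiff Q {u, v} ∧ curSources ep p.2 = ∅},
          curWt J p.1.1 * curWt J p.1.2 *
            (if curConn ep (p.1.1 + p.1.2) u v then 0 else 1)) ∧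
      0 ≤ edgeEv ep J (fun σ => (∏ a ∈ Q, spin σ a) * spin σ u * spin σ v) -
            edgeEv ep J (fun σ => ∏ a ∈ Q, spin σ a) *
              edgeEv ep J (fun σ => spin σ u * spin σ v) := by
  classical
  have hZ : 0 < ∑ σ : V → Bool, edgeWt ep J σ :=
    Finset.sum_pos (fun σ _ => Real.exp_pos _) Finset.univ_nonempty
  by_cases huv : u = v
  · subst huv
    have hf1 : (fun σ : V → Bool => (∏ a ∈ Q, spin σ a) * spin σ u * spin σ u)
        = fun σ : V → Bool => ∏ a ∈ Q, spin σ a := by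
      funext σ; rw [mul_assoc, RC.spin_mul_self, mul_one]
    have hEv1 : edgeEv ep J (fun σ => spin σ u * spin σ u) = 1 := by
      unfold edgeEv
      rw [Finset.sum_congr rfl fun σ _ =>
        show (fun σ : V → Bool => spin σ u * spin σ u) σ * edgeWt ep J σ = edgeWt ep J σ by
          show spin σ u * spin σ u * edgeWt ep J σ = edgeWt ep J σ
          rw [RC.spin_mul_self, one_mul]]
      exact div_self hZ.ne'
    have hdiff : edgeEv ep J (fun σ => (∏ a ∈ Q, spin σ a) * spin σ u * spin σ u) -
        edgeEv ep J (fun σ => ∏ a ∈ Q, spin σ a) *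
          edgeEv ep J (fun σ => spin σ u * spin σ u) = 0 := by
      rw [hf1, hEv1, mul_one, sub_self]
    refine ⟨?_, ?_⟩
    · rw [hdiff, mul_zero]
      symm
      have hzero : ∀ p : {p : (E → ℕ) × (E → ℕ) //
            curSources ep p.1 = symmDiff Q {u, u} ∧ curSources ep p.2 = ∅},
          curWt J (p : (E → ℕ) × (E → ℕ)).1 * curWt J (p : (E → ℕ) × (E → ℕ)).2 *
            (if curConn ep ((p : (E → ℕ) × (E → ℕ)).1 + (p : (E → ℕ) × (E → ℕ)).2) u u
              then (0:ℝ) else 1) = 0 := by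
        intro p
        rw [if_pos (show curConn ep ((p : (E → ℕ) × (E → ℕ)).1 + (p : (E → ℕ) × (E → ℕ)).2) u u
          from Relation.ReflTransGen.refl), mul_zero]
      rw [tsum_congr hzero]
      exact tsum_zero
    · rw [hdiff]
  · -- main case u ≠ v
    set c : ℝ := 2 ^ Fintype.card V with hcdef
    have hcpos : (0:ℝ) < c := by positivity
    set A : Finset V := Q ∆ ({u, v} : Finset V) with hAdef
    set t : Finset V → ℝ :=
      fun R => ∑' n : E → ℕ, (if curSources ep n = R then curWt J n else 0) with htdef
    set TE : Finset V → ENNReal :=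
      fun R => ∑' n : E → ℕ, (if curSources ep n = R then ENNReal.ofReal (curWt J n) else 0)
      with hTEdef
    have htTE : ∀ R, t R = (TE R).toReal := by
      intro R
      have h1 : (TE R).toReal
          = ∑' n : E → ℕ, (if curSources ep n = R
              then ENNReal.ofReal (curWt J n) else 0).toReal := by
        rw [hTEdef]
        exact ENNReal.tsum_toReal_eq (fun n => by split <;> simp)
      rw [htdef, h1]
      refine tsum_congr fun n => ?_
      split
      · rw [ENNReal.toReal_ofReal (RC.curWt_nonneg J hferro n)]
      · simp
    have hTEne : ∀ R, TE R ≠ ⊤ := by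
      intro R
      have hle : TE R ≤ ∑' n : E → ℕ, ENNReal.ofReal (curWt J n) :=
        ENNReal.tsum_le_tsum fun n => by split <;> simp
      have heq : (∑' n : E → ℕ, ENNReal.ofReal (curWt J n))
          = ENNReal.ofReal (∑' n, curWt J n) :=
        (ENNReal.ofReal_tsum_of_nonneg (RC.curWt_nonneg J hferro) (RC.summable_curWt J hferro)).symm
      exact ne_top_of_le_ne_top (by rw [heq]; exact ENNReal.ofReal_ne_top) hle
    have hrep : ∀ R : Finset V,
        ∑ σ : V → Bool, (∏ a ∈ R, spin σ a) * edgeWt ep J σ = c * t R :=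
      fun R => RC.rep ep J hferro R
    have hZeq : (∑ σ : V → Bool, edgeWt ep J σ) = c * t ∅ := by
      have h := hrep ∅
      rw [Finset.sum_congr rfl (fun σ _ => by rw [Finset.prod_empty, one_mul])] at h
      exact h
    have ht0pos : 0 < t ∅ := by
      by_contra hle
      push_neg at hle
      have : c * t ∅ ≤ 0 := mul_nonpos_of_nonneg_of_nonpos hcpos.le hle
      rw [← hZeq] at this
      exact absurd this (not_le.2 hZ)
    have hfA : (fun σ : V → Bool => (∏ a ∈ Q, spin σ a) * spin σ u * spin σ v)
        = fun σ => ∏ a ∈ A, spin σ a := by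
      funext σ
      rw [mul_assoc, ← Finset.prod_pair huv, RC.prod_spin_symmDiff, hAdef]
    have hfB : (fun σ : V → Bool => spin σ u * spin σ v)
        = fun σ => ∏ a ∈ ({u, v} : Finset V), spin σ a := by
      funext σ; rw [Finset.prod_pair huv]
    have hEvA : edgeEv ep J (fun σ => (∏ a ∈ Q, spin σ a) * spin σ u * spin σ v)
        = c * t A / (c * t ∅) := by
      unfold edgeEv; rw [hfA, hrep A, hZeq]
    have hEvQ : edgeEv ep J (fun σ => ∏ a ∈ Q, spin σ a) = c * t Q / (c * t ∅) := by
      unfold edgeEv; rw [hrep Q, hZeq]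
    have hEvB : edgeEv ep J (fun σ => spin σ u * spin σ v)
        = c * t ({u, v} : Finset V) / (c * t ∅) := by
      unfold edgeEv; rw [hfB, hrep ({u, v} : Finset V), hZeq]
    -- ENNReal side
    have hTEmul : ∀ R R' : Finset V, TE R * TE R' = ∑' p : (E → ℕ) × (E → ℕ),
        (if curSources ep p.1 = R ∧ curSources ep p.2 = R'
          then ENNReal.ofReal (curWt J p.1) * ENNReal.ofReal (curWt J p.2) else 0) := by
      intro R R'
      symm
      rw [ENNReal.tsum_prod']
      rw [tsum_congr (fun a => tsum_congr (fun b =>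
        show (if curSources ep a = R ∧ curSources ep b = R'
            then ENNReal.ofReal (curWt J a) * ENNReal.ofReal (curWt J b) else 0)
          = (if curSources ep a = R then ENNReal.ofReal (curWt J a) else 0) *
            (if curSources ep b = R' then ENNReal.ofReal (curWt J b) else 0) from by
          by_cases h1 : curSources ep a = R <;> by_cases h2 : curSources ep b = R' <;>
            simp [h1, h2]))]
      rw [tsum_congr (fun a => ENNReal.tsum_mul_left), ENNReal.tsum_mul_right]
    set Sconn : ENNReal := ∑' p : (E → ℕ) × (E → ℕ),
        (if curSources ep p.1 = A ∧ curSources ep p.2 = ∅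
          then ENNReal.ofReal (curWt J p.1) * ENNReal.ofReal (curWt J p.2) else 0)
        * (if curConn ep (p.1 + p.2) u v then 1 else 0) with hSconn
    set Snot : ENNReal := ∑' p : (E → ℕ) × (E → ℕ),
        (if curSources ep p.1 = A ∧ curSources ep p.2 = ∅
          then ENNReal.ofReal (curWt J p.1) * ENNReal.ofReal (curWt J p.2) else 0)
        * (if curConn ep (p.1 + p.2) u v then 0 else 1) with hSnot
    have hsplit : TE A * TE ∅ = Sconn + Snot := by
      rw [hTEmul A ∅, hSconn, hSnot, ← ENNReal.tsum_add]
      refine tsum_congr fun p => ?_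
      by_cases hcn : curConn ep (p.1 + p.2) u v <;>
        simp [hcn]
    have hswitch : TE Q * TE ({u, v} : Finset V) = Sconn := by
      rw [hTEmul Q ({u, v} : Finset V), hSconn, hAdef]
      exact RC.switching_tsum ep J huv hferro Q
    have hTop : TE A * TE ∅ ≠ ⊤ := ENNReal.mul_ne_top (hTEne A) (hTEne ∅)
    have hSconn_ne : Sconn ≠ ⊤ := by
      intro h
      rw [hsplit, h] at hTop
      simp at hTop
    have hSnot_ne : Snot ≠ ⊤ := by
      intro h
      rw [hsplit, h] at hTop
      simp at hTop
    have hreal : t ∅ * t A - t Q * t ({u, v} : Finset V) = Snot.toReal := by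
      have h1 : t A * t ∅ = Sconn.toReal + Snot.toReal := by
        rw [htTE, htTE, ← ENNReal.toReal_mul, hsplit,
          ENNReal.toReal_add hSconn_ne hSnot_ne]
      have h2 : t Q * t ({u, v} : Finset V) = Sconn.toReal := by
        rw [htTE, htTE, ← ENNReal.toReal_mul, hswitch]
      calc t ∅ * t A - t Q * t ({u, v} : Finset V)
          = (Sconn.toReal + Snot.toReal) - Sconn.toReal := by
            rw [mul_comm (t ∅), h1, h2]
        _ = Snot.toReal := by ring
    have hRHS : (∑' p : {p : (E → ℕ) × (E → ℕ) //
            curSources ep p.1 = symmDiff Q {u, v} ∧ curSources ep p.2 = ∅},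
          curWt J (p : (E → ℕ) × (E → ℕ)).1 * curWt J (p : (E → ℕ) × (E → ℕ)).2 *
            (if curConn ep ((p : (E → ℕ) × (E → ℕ)).1 + (p : (E → ℕ) × (E → ℕ)).2) u v
              then (0:ℝ) else 1)) = Snot.toReal := by
      have hsubty := tsum_subtype {p : (E → ℕ) × (E → ℕ) |
          curSources ep p.1 = symmDiff Q {u, v} ∧ curSources ep p.2 = ∅}
        (fun p => curWt J p.1 * curWt J p.2 *
          (if curConn ep (p.1 + p.2) u v then (0:ℝ) else 1))
      refine hsubty.trans ?_
      have hne : ∀ p : (E → ℕ) × (E → ℕ),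
          ((if curSources ep p.1 = A ∧ curSources ep p.2 = ∅
            then ENNReal.ofReal (curWt J p.1) * ENNReal.ofReal (curWt J p.2) else 0)
          * (if curConn ep (p.1 + p.2) u v then 0 else 1)) ≠ ⊤ := by
        intro p
        refine ENNReal.mul_ne_top ?_ ?_
        · split
          · exact ENNReal.mul_ne_top ENNReal.ofReal_ne_top ENNReal.ofReal_ne_top
          · exact ENNReal.zero_ne_top
        · split
          · exact ENNReal.zero_ne_top
          · exact ENNReal.one_ne_top
      rw [hSnot, ENNReal.tsum_toReal_eq hne]
      refine tsum_congr fun p => ?_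
      by_cases hp : curSources ep p.1 = A ∧ curSources ep p.2 = ∅
      · have hp' : p ∈ {p : (E → ℕ) × (E → ℕ) |
            curSources ep p.1 = symmDiff Q {u, v} ∧ curSources ep p.2 = ∅} := by
          rw [Set.mem_setOf_eq]; exact hp
        rw [Set.indicator_of_mem hp', if_pos hp]
        by_cases hcn : curConn ep (p.1 + p.2) u v
        · simp [hcn]
        · simp [hcn, ENNReal.toReal_mul,
            ENNReal.toReal_ofReal (RC.curWt_nonneg J hferro p.1),
            ENNReal.toReal_ofReal (RC.curWt_nonneg J hferro p.2)]
      · have hp' : p ∉ {p : (E → ℕ) × (E → ℕ) |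
            curSources ep p.1 = symmDiff Q {u, v} ∧ curSources ep p.2 = ∅} := by
          rw [Set.mem_setOf_eq]; exact hp
        rw [Set.indicator_of_notMem hp', if_neg hp, zero_mul]
        simp
    have hfinal1 : ((∑ σ : V → Bool, edgeWt ep J σ) / c) ^ 2 *
        (edgeEv ep J (fun σ => (∏ a ∈ Q, spin σ a) * spin σ u * spin σ v) -
          edgeEv ep J (fun σ => ∏ a ∈ Q, spin σ a) *
            edgeEv ep J (fun σ => spin σ u * spin σ v))
        = t ∅ * t A - t Q * t ({u, v} : Finset V) := by
      rw [hEvA, hEvQ, hEvB, hZeq]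
      field_simp
    refine ⟨?_, ?_⟩
    · calc ((∑ σ : V → Bool, edgeWt ep J σ) / c) ^ 2 *
          (edgeEv ep J (fun σ => (∏ a ∈ Q, spin σ a) * spin σ u * spin σ v) -
            edgeEv ep J (fun σ => ∏ a ∈ Q, spin σ a) *
              edgeEv ep J (fun σ => spin σ u * spin σ v))
          = t ∅ * t A - t Q * t ({u, v} : Finset V) := hfinal1
        _ = Snot.toReal := hreal
        _ = _ := hRHS.symm
    · have hposc : 0 < ((∑ σ : V → Bool, edgeWt ep J σ) / c) ^ 2 := by
        have : 0 < (∑ σ : V → Bool, edgeWt ep J σ) / c := div_pos hZ hcpos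
        positivity
      have hge : 0 ≤ ((∑ σ : V → Bool, edgeWt ep J σ) / c) ^ 2 *
          (edgeEv ep J (fun σ => (∏ a ∈ Q, spin σ a) * spin σ u * spin σ v) -
            edgeEv ep J (fun σ => ∏ a ∈ Q, spin σ a) *
              edgeEv ep J (fun σ => spin σ u * spin σ v)) := by
        rw [hfinal1, hreal]
        exact ENNReal.toReal_nonneg
      nlinarith [hposc, hge]
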